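/- Suppose (s_μ)_{μ∈S} (S = {-S,...,S}, 2S odd) are elements of a von Neumann algebra M with s_μ*s_ν = δ_{μν}1, and Ξ̂ is an antilinear *-automorphism of M with Ξ̂² = id. Define t_μ = (-1)^{S+μ} Ξ̂(s_{-μ}). If there exists a unimodular c ∈ C with t_μ = c·s_μ for all μ, then s_μ = 0 for all μ. -/

import Mathlib

/-- Let `(s_μ)_{μ ∈ {-S,…,S}}` (with `2S = 2k+1` odd; here `μ = i - S`
is indexed by `i : Fin (2k+2)`, so `-μ ↔ Fin.rev i` and `(-1)^{S+μ} = (-1)^i`) be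
elements of a von Neumann algebra (formalized as a C*-algebra `M`) with
`s_μ* s_ν = δ_{μν} 1`, and let `Ξ̂` be an antilinear *-automorphism of `M` with
`Ξ̂² = id`.  Set `t_μ = (-1)^{S+μ} Ξ̂(s_{-μ})`.  If `t_μ = c • s_μ` for all `μ` with a
unimodular `c`, then `s_μ = 0` for all `μ`. -/
theorem time_reversal_LSM_core (k : ℕ)
    (M : Type*) [NormedRing M] [NormedAlgebra ℂ M] [StarRing M] [CStarRing M]
    [CompleteSpace M] [StarModule ℂ M]
    (Ξ : M → M)
    (hadd : ∀ a b, Ξ (a + b) = Ξ a + Ξ b)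
    (hsmul : ∀ (α : ℂ) a, Ξ (α • a) = (starRingEnd ℂ α) • Ξ a)
    (hmul : ∀ a b, Ξ (a * b) = Ξ a * Ξ b)
    (hstar : ∀ a, Ξ (star a) = star (Ξ a))
    (hinv : ∀ a, Ξ (Ξ a) = a)
    (s : Fin (2*k+2) → M)
    (hortho : ∀ i j, star (s i) * s j = if i = j then 1 else 0)
    (c : ℂ) (hc : ‖c‖ = 1)
    (h : ∀ i : Fin (2*k+2), ((-1 : ℂ) ^ (i : ℕ)) • Ξ (s (Fin.rev i)) = c • s i) :
    ∀ i, s i = 0 := by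
  intro i
  have hcc : (starRingEnd ℂ c) * c = 1 := by
    rw [mul_comm, Complex.mul_conj]
    norm_cast
    simp [Complex.normSq_eq_norm_sq, hc]
  have hsq : ∀ n : ℕ, (-1:ℂ) ^ n * (-1:ℂ) ^ n = 1 := fun n => by
    rw [← pow_add]; exact Even.neg_one_pow ⟨n, rfl⟩
  -- relation at i
  have hi := h i
  -- Ξ(s (rev i)) = (-1)^i • (c • s i)
  have h1 : Ξ (s (Fin.rev i)) = ((-1 : ℂ) ^ (i : ℕ)) • (c • s i) := by
    calc Ξ (s (Fin.rev i))
        = (((-1 : ℂ) ^ (i:ℕ)) * ((-1:ℂ) ^ (i:ℕ))) • Ξ (s (Fin.rev i)) := by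
          rw [hsq, one_smul]
      _ = ((-1 : ℂ) ^ (i : ℕ)) • (c • s i) := by rw [mul_smul, hi]
  -- relation at rev i
  have h2 := h (Fin.rev i : Fin (2*k+2))
  rw [Fin.rev_rev] at h2
  have h3 := congrArg Ξ h2
  rw [hsmul, hsmul, hinv, h1] at h3
  have hrev : ((Fin.rev i : Fin (2*k+2)) : ℕ) = 2*k+1 - (i : ℕ) := by
    simp [Fin.val_rev]
  have hsign : (starRingEnd ℂ ((-1:ℂ) ^ ((Fin.rev i : Fin (2*k+2)) : ℕ)))
      = -((-1:ℂ) ^ (i : ℕ)) := by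
    rw [map_pow, map_neg, map_one, hrev]
    have key : (-1:ℂ) ^ (2*k+1 - (i:ℕ)) * (-1:ℂ) ^ (i:ℕ) = -1 := by
      rw [← pow_add, Nat.sub_add_cancel (by omega : (i:ℕ) ≤ 2*k+1)]
      exact Odd.neg_one_pow ⟨k, by ring⟩
    have := congrArg (fun x => x * (-1:ℂ)^(i:ℕ)) key
    simp only [mul_assoc, hsq, mul_one] at this
    linear_combination this
  rw [hsign] at h3
  -- h3 : conj c • ((-1)^i • (c • s i)) = (-(-1)^i) • s i  (direction?)
  have h4 : (-((-1:ℂ)^(i:ℕ))) • s i = ((-1:ℂ)^(i:ℕ)) • s i := by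
    rw [h3, smul_smul, smul_smul]
    congr 1
    rw [mul_comm (starRingEnd ℂ c), mul_assoc, hcc, mul_one]
  have h6 : ((-1:ℂ)^(i:ℕ)) • s i = 0 := by
    have h5 : (2 : ℂ) • (((-1:ℂ)^(i:ℕ)) • s i) = 0 := by
      have := sub_eq_zero_of_eq h4
      rw [two_smul]
      linear_combination (norm := module) -this
    rcases smul_eq_zero.mp h5 with h' | h'
    · exact absurd h' (by norm_num)
    · exact h'
  rcases smul_eq_zero.mp h6 with h' | h'
  · exact absurd h' (pow_ne_zero _ (by norm_num))
  · exact h'
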